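/- For quantum FedAvg, under β-smoothness, bounded gradient dissimilarity with constants G and B, unbiased classical stochastic gradients with variance σ², and the biased quantum gradient oracle with bias bound U_q and variance σ_q², if η_ℓ ≤ c₀/((1+B²)βKη_g) and η_g ≥ 1 for a sufficiently small absolute constant c₀ > 0, then there exists an absolute constant C > 0 such that the average local-drift energy satisfies E_r ≤ C η_ℓ² K² ( B²‖∇f(x^{r−1})‖² + G² + U_q² + σ² + σ_q² ). -/

import Mathlib

open MeasureTheory
open scoped BigOperators RealInnerProductSpace

/-- The global objective `f(x) = (1/N) Σ_i f_i(x)`. -/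
noncomputable def globalObj {d N : ℕ} (f : Fin N → EuclideanSpace ℝ (Fin d) → ℝ) :
    EuclideanSpace ℝ (Fin d) → ℝ :=
  fun x => (1 / (N : ℝ)) * ∑ i, f i x

set_option maxHeartbeats 1000000

section Helpers

lemma continuous_of_lip' {E : Type*} [NormedAddCommGroup E] {g : E → E} {β : ℝ}
    (hβ : 0 < β) (h : ∀ x y, ‖g x - g y‖ ≤ β * ‖x - y‖) : Continuous g := by
  refine (LipschitzWith.of_dist_le_mul (K := ⟨β, hβ.le⟩) fun x y => ?_).continuous
  show dist (g x) (g y) ≤ β * dist x y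
  simpa [dist_eq_norm] using h x y

lemma memℒp_two_condexp' {α E : Type*} [NormedAddCommGroup E] [InnerProductSpace ℝ E]
    [CompleteSpace E] {m m0 : MeasurableSpace α} (hm : m ≤ m0) {μ : Measure α}
    [IsFiniteMeasure μ] {f : α → E} (hf : MemLp f 2 μ) : MemLp (μ[f|m]) 2 μ := by
  have hev : ((condExpL2 E ℝ hm (hf.toLp f) : α →₂[μ] E) : α → E) =ᵐ[μ] μ[f|m] := by
    refine ae_eq_condExp_of_forall_setIntegral_eq hm (hf.integrable one_le_two)
      (fun s _ hμs => integrableOn_condExpL2_of_measure_ne_top hm hμs.ne _)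
      (fun s hs hμs => ?_) (aestronglyMeasurable_condExpL2 hm _)
    rw [integral_condExpL2_eq hm (hf.toLp f) hs hμs.ne]
    exact setIntegral_congr_ae (hm s hs) ((hf.coeFn_toLp).mono fun ω h _ => h)
  exact (Lp.memLp _).ae_eq hev

lemma condexp_le_const_of_le' {α : Type*} {m1 m2 m0 : MeasurableSpace α} {μ : Measure α}
    [IsFiniteMeasure μ] (h12 : m1 ≤ m2) (h2 : m2 ≤ m0) {f : α → ℝ}
    {c : ℝ} (h : μ[f|m2] ≤ᵐ[μ] fun _ => c) : μ[f|m1] ≤ᵐ[μ] fun _ => c := by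
  have h1 : μ[μ[f|m2]|m1] =ᵐ[μ] μ[f|m1] := condExp_condExp_of_le h12 h2
  have h2' : μ[μ[f|m2]|m1] ≤ᵐ[μ] μ[(fun _ => c : α → ℝ)|m1] :=
    condExp_mono integrable_condExp (integrable_const c) h
  have hc : μ[(fun _ => c : α → ℝ)|m1] = fun _ => c := condExp_const (h12.trans h2) c
  filter_upwards [h1, h2'] with ω e1 e2
  rw [← e1]
  simpa [hc] using e2

lemma norm_add_five_sq {E : Type*} [SeminormedAddCommGroup E] (a b c d e : E) :
    ‖a + b + c + d + e‖ ^ 2 ≤ 5 * (‖a‖ ^ 2 + ‖b‖ ^ 2 + ‖c‖ ^ 2 + ‖d‖ ^ 2 + ‖e‖ ^ 2) := by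
  have h1 : ‖a + b + c + d + e‖ ≤ ‖a‖ + ‖b‖ + ‖c‖ + ‖d‖ + ‖e‖ := by
    calc ‖a + b + c + d + e‖ ≤ ‖a + b + c + d‖ + ‖e‖ := norm_add_le _ _
      _ ≤ (‖a + b + c‖ + ‖d‖) + ‖e‖ := by gcongr; exact norm_add_le _ _
      _ ≤ ((‖a + b‖ + ‖c‖) + ‖d‖) + ‖e‖ := by gcongr; exact norm_add_le _ _
      _ ≤ (((‖a‖ + ‖b‖) + ‖c‖) + ‖d‖) + ‖e‖ := by gcongr; exact norm_add_le _ _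
  have h2 : ‖a + b + c + d + e‖ ^ 2 ≤ (‖a‖ + ‖b‖ + ‖c‖ + ‖d‖ + ‖e‖) ^ 2 := by
    have := norm_nonneg (a + b + c + d + e)
    nlinarith
  nlinarith [sq_nonneg (‖a‖ - ‖b‖), sq_nonneg (‖a‖ - ‖c‖), sq_nonneg (‖a‖ - ‖d‖),
    sq_nonneg (‖a‖ - ‖e‖), sq_nonneg (‖b‖ - ‖c‖), sq_nonneg (‖b‖ - ‖d‖),
    sq_nonneg (‖b‖ - ‖e‖), sq_nonneg (‖c‖ - ‖d‖), sq_nonneg (‖c‖ - ‖e‖),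
    sq_nonneg (‖d‖ - ‖e‖)]

lemma norm_sum_range_sq_le {E : Type*} [SeminormedAddCommGroup E] (k : ℕ) (v : ℕ → E) :
    ‖∑ j ∈ Finset.range k, v j‖ ^ 2 ≤ (k : ℝ) * ∑ j ∈ Finset.range k, ‖v j‖ ^ 2 := by
  have h1 : ‖∑ j ∈ Finset.range k, v j‖ ≤ ∑ j ∈ Finset.range k, ‖v j‖ := norm_sum_le _ _
  have h2 : (∑ j ∈ Finset.range k, ‖v j‖) ^ 2
      ≤ ((Finset.range k).card : ℝ) * ∑ j ∈ Finset.range k, ‖v j‖ ^ 2 :=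
    sq_sum_le_card_mul_sum_sq
  have h3 : ‖∑ j ∈ Finset.range k, v j‖ ^ 2 ≤ (∑ j ∈ Finset.range k, ‖v j‖) ^ 2 := by
    have := norm_nonneg (∑ j ∈ Finset.range k, v j)
    nlinarith
  simpa [Finset.card_range] using h3.trans h2

lemma drift_recursion (K : ℕ) (S T : ℕ → ℝ) (M η b : ℝ) (hM : 0 ≤ M) (hη : 0 ≤ η) (hb : 0 ≤ b)
    (hηb : η * b * K ≤ 1 / 4)
    (hS : ∀ k ≤ K, S k ≤ η ^ 2 * k * ∑ j ∈ Finset.range k, T j)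
    (hT : ∀ k < K, T k ≤ 5 * M + 5 * b ^ 2 * S k) :
    ∀ k ≤ K, S k ≤ 10 * η ^ 2 * k ^ 2 * M := by
  intro k
  induction k using Nat.strong_induction_on with
  | _ k ih =>
    intro hkK
    have hkR : (0:ℝ) ≤ (k:ℝ) := Nat.cast_nonneg k
    have hsum : ∑ j ∈ Finset.range k, T j
        ≤ ∑ j ∈ Finset.range k, (5 * M + 50 * b ^ 2 * η ^ 2 * (k:ℝ) ^ 2 * M) := by
      refine Finset.sum_le_sum fun j hj => ?_
      have hjk := Finset.mem_range.mp hj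
      have h1 := hT j (lt_of_lt_of_le hjk hkK)
      have h2 := ih j hjk (le_trans hjk.le hkK)
      have hjR : (j:ℝ) ≤ (k:ℝ) := Nat.cast_le.mpr hjk.le
      have hjR0 : (0:ℝ) ≤ (j:ℝ) := Nat.cast_nonneg j
      have h3 : 5 * b ^ 2 * S j ≤ 5 * b ^ 2 * (10 * η ^ 2 * (j:ℝ) ^ 2 * M) :=
        mul_le_mul_of_nonneg_left h2 (by positivity)
      have h5 : (j:ℝ) ^ 2 ≤ (k:ℝ) ^ 2 := by nlinarith
      have h6 : 50 * b ^ 2 * η ^ 2 * (j:ℝ) ^ 2 * M ≤ 50 * b ^ 2 * η ^ 2 * (k:ℝ) ^ 2 * M := by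
        have : (0:ℝ) ≤ 50 * b ^ 2 * η ^ 2 * M := by positivity
        nlinarith
      nlinarith
    have hsum2 : ∑ j ∈ Finset.range k, (5 * M + 50 * b ^ 2 * η ^ 2 * (k:ℝ) ^ 2 * M)
        = (k:ℝ) * (5 * M + 50 * b ^ 2 * η ^ 2 * (k:ℝ) ^ 2 * M) := by
      rw [Finset.sum_const, Finset.card_range, nsmul_eq_mul]
    have hkey : η * b * (k:ℝ) ≤ 1 / 4 := by
      have hK : (k:ℝ) ≤ (K:ℝ) := Nat.cast_le.mpr hkK
      nlinarith [mul_nonneg hη hb]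
    have hSk := hS k hkK
    have h4 : S k ≤ η ^ 2 * (k:ℝ) * ((k:ℝ) * (5 * M + 50 * b ^ 2 * η ^ 2 * (k:ℝ) ^ 2 * M)) := by
      calc S k ≤ η ^ 2 * k * ∑ j ∈ Finset.range k, T j := hSk
        _ ≤ η ^ 2 * (k:ℝ) * ((k:ℝ) * (5 * M + 50 * b ^ 2 * η ^ 2 * (k:ℝ) ^ 2 * M)) := by
            rw [← hsum2]
            exact mul_le_mul_of_nonneg_left hsum (by positivity)
    have hfin : η ^ 2 * (k:ℝ) * ((k:ℝ) * (5 * M + 50 * b ^ 2 * η ^ 2 * (k:ℝ) ^ 2 * M))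
        ≤ 10 * η ^ 2 * (k:ℝ) ^ 2 * M := by
      have hq : (η * b * (k:ℝ)) ^ 2 ≤ (1/4) ^ 2 := by
        have h0 : 0 ≤ η * b * (k:ℝ) := by positivity
        nlinarith
      nlinarith [mul_nonneg (mul_nonneg (sq_nonneg η) (sq_nonneg (k:ℝ))) hM, sq_nonneg (η*(k:ℝ))]
    exact h4.trans hfin

end Helpers

/-- **FedAvg local-drift bound.**
There are absolute constants `c₀, C > 0` such that, for one round of quantum FedAvg under
β-smoothness, bounded gradient dissimilarity `(G, B)`, unbiased classical stochastic gradients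
(variance `σ²`) and the biased quantum oracle (bias `U_q`, variance `σ_q²`), if
`η_ℓ ≤ c₀/((1+B²) β K η_g)` and `η_g ≥ 1`, then the average local-drift energy satisfies
`E_r ≤ C η_ℓ² K² (B²‖∇f(x^{r−1})‖² + G² + U_q² + σ² + σ_q²)` almost surely
(conditionally on the past `ℱ_{r−1}`). -/
theorem stmt_4 :
    ∃ c₀ : ℝ, 0 < c₀ ∧ ∃ C : ℝ, 0 < C ∧
    ∀ {d N K : ℕ}, 0 < N → 0 < K →
    ∀ {Ω : Type} [mΩ : MeasurableSpace Ω] (μ : Measure Ω) [IsProbabilityMeasure μ]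
      (ℱ0 : MeasurableSpace Ω) (𝒢 ℋ : ℕ → MeasurableSpace Ω),
      ℱ0 ≤ 𝒢 0 → (∀ k, 𝒢 k ≤ ℋ k) → (∀ k, ℋ k ≤ 𝒢 (k + 1)) → (∀ k, ℋ k ≤ mΩ) →
    ∀ (f : Fin N → EuclideanSpace ℝ (Fin d) → ℝ) (β : ℝ), 0 < β →
      -- β-smoothness (A1)
      (∀ i x y', ‖gradient (f i) x - gradient (f i) y'‖ ≤ β * ‖x - y'‖) →
    ∀ (G B : ℝ), 0 ≤ G → 1 ≤ B →
      -- bounded gradient dissimilarity (A2)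
      (∀ x, (1 / (N : ℝ)) * ∑ i, ‖gradient (f i) x‖ ^ 2
          ≤ G ^ 2 + B ^ 2 * ‖gradient (globalObj f) x‖ ^ 2) →
    ∀ (xprev : Ω → EuclideanSpace ℝ (Fin d)), StronglyMeasurable[ℱ0] xprev →
    ∀ (y g gtil : Fin N → ℕ → Ω → EuclideanSpace ℝ (Fin d)),
      (∀ i k, StronglyMeasurable[𝒢 k] (y i k)) →
      (∀ i k, StronglyMeasurable[ℋ k] (g i k)) →
      (∀ i k, Integrable (gtil i k) μ) →
      (∀ i k, Integrable (fun ω => ‖gtil i k ω‖ ^ 2) μ) →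
      (∀ i k, Integrable (fun ω => ‖y i k ω - xprev ω‖ ^ 2) μ) →
    ∀ (σ : ℝ), 0 ≤ σ →
      -- unbiased classical stochastic gradient with variance at most σ² (A3)
      (∀ i k, μ[g i k | 𝒢 k] =ᵐ[μ] fun ω => gradient (f i) (y i k ω)) →
      (∀ i k, μ[(fun ω => ‖g i k ω - gradient (f i) (y i k ω)‖ ^ 2) | 𝒢 k]
          ≤ᵐ[μ] fun _ => σ ^ 2) →
    ∀ (b : Fin N → EuclideanSpace ℝ (Fin d) → EuclideanSpace ℝ (Fin d)) (Uq σq : ℝ),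
      0 ≤ Uq → 0 ≤ σq →
      -- biased quantum gradient oracle (A4)
      (∀ i x, ‖b i x‖ ≤ Uq) →
      (∀ i k, μ[gtil i k | ℋ k] =ᵐ[μ] fun ω => g i k ω + b i (y i k ω)) →
      (∀ i k, μ[(fun ω => ‖gtil i k ω - (g i k ω + b i (y i k ω))‖ ^ 2) | ℋ k]
          ≤ᵐ[μ] fun _ => σq ^ 2) →
    ∀ (ηl ηg : ℝ), 0 < ηl → 0 < ηg →
      -- step sizes: `η_ℓ ≤ c₀/((1+B²) β K η_g)` and `η_g ≥ 1`
      ηl ≤ c₀ / ((1 + B ^ 2) * β * K * ηg) → 1 ≤ ηg →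
      -- local updates
      (∀ i ω, y i 0 ω = xprev ω) →
      (∀ i k ω, k < K → y i (k + 1) ω = y i k ω - ηl • gtil i k ω) →
    -- conclusion: conditional average local-drift energy bound
    ∀ᵐ ω ∂μ,
      (1 / ((K : ℝ) * N)) * ∑ i, ∑ k ∈ Finset.range K,
          (μ[(fun ω' => ‖y i k ω' - xprev ω'‖ ^ 2) | ℱ0]) ω
        ≤ C * ηl ^ 2 * K ^ 2 *
          (B ^ 2 * ‖gradient (globalObj f) (xprev ω)‖ ^ 2
            + G ^ 2 + Uq ^ 2 + σ ^ 2 + σq ^ 2) := by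
  
  refine ⟨1/2, by norm_num, 10, by norm_num, ?_⟩
  intro d N K hN hK Ω mΩ μ hPμ ℱ0 𝒢 ℋ hF0G0 hGH hHG hHm
  intro f β hβ hsmooth G B hG hB hdiss xprev hxprev y g gtil hySM hgSM hgtilInt hgtilSq hySq
  intro σ hσ hA3 hA3var b Uq σq hUq hσq hbbd hA4 hA4var
  intro ηl ηg hηl hηg hstep hηg1 hy0 hupd
  -- σ-algebra ordering facts
  have hGm : ∀ k, 𝒢 k ≤ mΩ := fun k => (hGH k).trans (hHm k)
  have hF0G : ∀ k, ℱ0 ≤ 𝒢 k := by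
    intro k
    induction k with
    | zero => exact hF0G0
    | succ n ihn => exact ihn.trans ((hGH n).trans (hHG n))
  have hF0H : ∀ k, ℱ0 ≤ ℋ k := fun k => (hF0G k).trans (hGH k)
  have hF0m : ℱ0 ≤ mΩ := (hF0G 0).trans (hGm 0)
  have hgradcont : ∀ i, Continuous (gradient (f i)) := fun i => continuous_of_lip' hβ (hsmooth i)
  -- L² facts
  have hgtil2 : ∀ i k, MemLp (gtil i k) 2 μ := fun i k =>
    (memLp_two_iff_integrable_sq_norm (hgtilInt i k).aestronglyMeasurable).mpr (hgtilSq i k)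
  have hgb2 : ∀ i k, MemLp (fun ω => g i k ω + b i (y i k ω)) 2 μ := fun i k =>
    MemLp.ae_eq (hA4 i k) (memℒp_two_condexp' (hHm k) (hgtil2 i k))
  have hby2 : ∀ i k, MemLp (fun ω => b i (y i k ω)) 2 μ := by
    intro i k
    have h1 : (fun ω => b i (y i k ω))
        = (fun ω => (g i k ω + b i (y i k ω)) - g i k ω) := by
      funext ω; abel
    have hasm : AEStronglyMeasurable[mΩ] (fun ω => b i (y i k ω)) μ := by
      rw [h1]
      exact ((hgb2 i k).aestronglyMeasurable).sub
        ((hgSM i k).mono (hHm k)).aestronglyMeasurable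
    exact MemLp.of_bound hasm Uq (Filter.Eventually.of_forall fun ω => hbbd i (y i k ω))
  have hg2 : ∀ i k, MemLp (g i k) 2 μ := by
    intro i k
    have h1 : g i k = (fun ω => (g i k ω + b i (y i k ω)) - b i (y i k ω)) := by
      funext ω; abel
    rw [h1]
    exact (hgb2 i k).sub (hby2 i k)
  have hgrady2 : ∀ i k, MemLp (fun ω => gradient (f i) (y i k ω)) 2 μ := fun i k =>
    MemLp.ae_eq (hA3 i k) (memℒp_two_condexp' (hGm k) (hg2 i k))
  have hgradx2 : ∀ i, MemLp (fun ω => gradient (f i) (xprev ω)) 2 μ := by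
    intro i
    have h1 : (fun ω => gradient (f i) (xprev ω)) = fun ω => gradient (f i) (y i 0 ω) := by
      funext ω; rw [hy0 i ω]
    rw [h1]
    exact hgrady2 i 0
  have sqInt : ∀ {F : Ω → EuclideanSpace ℝ (Fin d)}, MemLp F 2 μ →
      Integrable (fun ω => ‖F ω‖ ^ 2) μ := fun h =>
    (memLp_two_iff_integrable_sq_norm h.aestronglyMeasurable).mp h
  have hA1int : ∀ i k,
      Integrable (fun ω => ‖gtil i k ω - (g i k ω + b i (y i k ω))‖ ^ 2) μ := by
    intro i k
    have := sqInt ((hgtil2 i k).sub (hgb2 i k))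
    simpa using this
  have hA2int : ∀ i k,
      Integrable (fun ω => ‖g i k ω - gradient (f i) (y i k ω)‖ ^ 2) μ := by
    intro i k
    have := sqInt ((hg2 i k).sub (hgrady2 i k))
    simpa using this
  have hA4int : ∀ i, Integrable (fun ω => ‖gradient (f i) (xprev ω)‖ ^ 2) μ :=
    fun i => sqInt (hgradx2 i)
  -- conditional variance bounds pulled back to ℱ0
  have hq : ∀ i k, μ[(fun ω => ‖gtil i k ω - (g i k ω + b i (y i k ω))‖ ^ 2)|ℱ0]
      ≤ᵐ[μ] fun _ => σq ^ 2 := fun i k =>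
    condexp_le_const_of_le' (hF0H k) (hHm k) (hA4var i k)
  have hc : ∀ i k, μ[(fun ω => ‖g i k ω - gradient (f i) (y i k ω)‖ ^ 2)|ℱ0]
      ≤ᵐ[μ] fun _ => σ ^ 2 := fun i k =>
    condexp_le_const_of_le' (hF0G k) (hGm k) (hA3var i k)
  have hdSM : ∀ i, StronglyMeasurable[ℱ0] (fun ω => ‖gradient (f i) (xprev ω)‖ ^ 2) := by
    intro i
    have hcont : Continuous fun v : EuclideanSpace ℝ (Fin d) => ‖gradient (f i) v‖ ^ 2 :=
      ((hgradcont i).norm).pow 2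
    exact hcont.comp_stronglyMeasurable hxprev
  have hd : ∀ i, μ[(fun ω => ‖gradient (f i) (xprev ω)‖ ^ 2)|ℱ0]
      = fun ω => ‖gradient (f i) (xprev ω)‖ ^ 2 := fun i =>
    condExp_of_stronglyMeasurable hF0m (hdSM i) (hA4int i)
  -- pathwise five-term bound
  have hPW : ∀ i k ω, ‖gtil i k ω‖ ^ 2
      ≤ 5 * ‖gtil i k ω - (g i k ω + b i (y i k ω))‖ ^ 2
        + 5 * ‖g i k ω - gradient (f i) (y i k ω)‖ ^ 2
        + 5 * β ^ 2 * ‖y i k ω - xprev ω‖ ^ 2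
        + 5 * ‖gradient (f i) (xprev ω)‖ ^ 2
        + 5 * Uq ^ 2 := by
    intro i k ω
    have hrw : gtil i k ω
        = (gtil i k ω - (g i k ω + b i (y i k ω)))
          + (g i k ω - gradient (f i) (y i k ω))
          + (gradient (f i) (y i k ω) - gradient (f i) (xprev ω))
          + gradient (f i) (xprev ω) + b i (y i k ω) := by abel
    have h5 := norm_add_five_sq (gtil i k ω - (g i k ω + b i (y i k ω)))
      (g i k ω - gradient (f i) (y i k ω))
      (gradient (f i) (y i k ω) - gradient (f i) (xprev ω))
      (gradient (f i) (xprev ω)) (b i (y i k ω))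
    have hLip := hsmooth i (y i k ω) (xprev ω)
    have hbb := hbbd i (y i k ω)
    have h1 : ‖gradient (f i) (y i k ω) - gradient (f i) (xprev ω)‖ ^ 2
        ≤ β ^ 2 * ‖y i k ω - xprev ω‖ ^ 2 := by
      nlinarith [norm_nonneg (gradient (f i) (y i k ω) - gradient (f i) (xprev ω)),
        norm_nonneg (y i k ω - xprev ω)]
    have h2 : ‖b i (y i k ω)‖ ^ 2 ≤ Uq ^ 2 := by
      nlinarith [norm_nonneg (b i (y i k ω))]
    conv_lhs => rw [hrw]
    nlinarith [h5, h1, h2]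
  -- conditional bound for the squared norm of the quantum gradient
  have hcomb : ∀ i k, μ[(fun ω => ‖gtil i k ω‖ ^ 2)|ℱ0] ≤ᵐ[μ]
      fun ω => 5 * σq ^ 2 + 5 * σ ^ 2
        + 5 * β ^ 2 * ((μ[(fun ω' => ‖y i k ω' - xprev ω'‖ ^ 2)|ℱ0]) ω)
        + 5 * ‖gradient (f i) (xprev ω)‖ ^ 2 + 5 * Uq ^ 2 := by
    intro i k
    have hF1 : Integrable
        ((5:ℝ) • fun ω => ‖gtil i k ω - (g i k ω + b i (y i k ω))‖ ^ 2) μ :=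
      (hA1int i k).smul (5:ℝ)
    have hF2 : Integrable ((5:ℝ) • fun ω => ‖g i k ω - gradient (f i) (y i k ω)‖ ^ 2) μ :=
      (hA2int i k).smul (5:ℝ)
    have hF3 : Integrable ((5 * β ^ 2 : ℝ) • fun ω => ‖y i k ω - xprev ω‖ ^ 2) μ :=
      (hySq i k).smul (5 * β ^ 2 : ℝ)
    have hF4 : Integrable ((5:ℝ) • fun ω => ‖gradient (f i) (xprev ω)‖ ^ 2) μ :=
      (hA4int i).smul (5:ℝ)
    have hF5 : Integrable (fun _ : Ω => 5 * Uq ^ 2) μ := integrable_const _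
    have hDint : Integrable
        (((5:ℝ) • fun ω => ‖gtil i k ω - (g i k ω + b i (y i k ω))‖ ^ 2)
          + ((5:ℝ) • fun ω => ‖g i k ω - gradient (f i) (y i k ω)‖ ^ 2)
          + ((5 * β ^ 2 : ℝ) • fun ω => ‖y i k ω - xprev ω‖ ^ 2)
          + ((5:ℝ) • fun ω => ‖gradient (f i) (xprev ω)‖ ^ 2)
          + (fun _ : Ω => 5 * Uq ^ 2)) μ :=
      (((hF1.add hF2).add hF3).add hF4).add hF5
    have hle : (fun ω => ‖gtil i k ω‖ ^ 2) ≤ᵐ[μ]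
        (((5:ℝ) • fun ω => ‖gtil i k ω - (g i k ω + b i (y i k ω))‖ ^ 2)
          + ((5:ℝ) • fun ω => ‖g i k ω - gradient (f i) (y i k ω)‖ ^ 2)
          + ((5 * β ^ 2 : ℝ) • fun ω => ‖y i k ω - xprev ω‖ ^ 2)
          + ((5:ℝ) • fun ω => ‖gradient (f i) (xprev ω)‖ ^ 2)
          + (fun _ : Ω => 5 * Uq ^ 2)) := by
      refine Filter.Eventually.of_forall fun ω => ?_
      have := hPW i k ω
      simp only [Pi.add_apply, Pi.smul_apply, smul_eq_mul]
      nlinarith [this]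
    have hmono := condExp_mono (μ := μ) (m := ℱ0) (hgtilSq i k) hDint hle
    have e2 := condExp_add (μ := μ) (m := ℱ0) hF1 hF2
    have e3 := condExp_add (μ := μ) (m := ℱ0) (hF1.add hF2) hF3
    have e4 := condExp_add (μ := μ) (m := ℱ0) ((hF1.add hF2).add hF3) hF4
    have e5 := condExp_add (μ := μ) (m := ℱ0) (((hF1.add hF2).add hF3).add hF4) hF5
    have s1 := condExp_smul (μ := μ) (m := ℱ0) (5:ℝ)
      (fun ω => ‖gtil i k ω - (g i k ω + b i (y i k ω))‖ ^ 2)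
    have s2 := condExp_smul (μ := μ) (m := ℱ0) (5:ℝ)
      (fun ω => ‖g i k ω - gradient (f i) (y i k ω)‖ ^ 2)
    have s3 := condExp_smul (μ := μ) (m := ℱ0) (5 * β ^ 2 : ℝ)
      (fun ω => ‖y i k ω - xprev ω‖ ^ 2)
    have s4 := condExp_smul (μ := μ) (m := ℱ0) (5:ℝ)
      (fun ω => ‖gradient (f i) (xprev ω)‖ ^ 2)
    have c5 : μ[(fun _ : Ω => 5 * Uq ^ 2)|ℱ0] = fun _ => 5 * Uq ^ 2 :=
      condExp_const hF0m _
    have hd4 := hd i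
    filter_upwards [hmono, e2, e3, e4, e5, s1, s2, s3, s4, hq i k, hc i k] with
      ω hω he2 he3 he4 he5 hs1 hs2 hs3 hs4 hhq hhc
    have hc5 : (μ[(fun _ : Ω => 5 * Uq ^ 2)|ℱ0]) ω = 5 * Uq ^ 2 := by rw [c5]
    have hd4' : (μ[(fun ω' => ‖gradient (f i) (xprev ω')‖ ^ 2)|ℱ0]) ω
        = ‖gradient (f i) (xprev ω)‖ ^ 2 := by rw [hd4]
    simp only [Pi.add_apply, Pi.smul_apply, smul_eq_mul] at hω he2 he3 he4 he5 hs1 hs2 hs3 hs4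
    calc (μ[(fun ω => ‖gtil i k ω‖ ^ 2)|ℱ0]) ω
        ≤ _ := hω
      _ ≤ 5 * σq ^ 2 + 5 * σ ^ 2
          + 5 * β ^ 2 * ((μ[(fun ω' => ‖y i k ω' - xprev ω'‖ ^ 2)|ℱ0]) ω)
          + 5 * ‖gradient (f i) (xprev ω)‖ ^ 2 + 5 * Uq ^ 2 := by
        rw [he5, he4, he3, he2, hs1, hs2, hs3, hs4, hc5, hd4']
        have h1 : (μ[(fun ω' => ‖gtil i k ω' - (g i k ω' + b i (y i k ω'))‖ ^ 2)|ℱ0]) ω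
            ≤ σq ^ 2 := hhq
        have h2 : (μ[(fun ω' => ‖g i k ω' - gradient (f i) (y i k ω')‖ ^ 2)|ℱ0]) ω
            ≤ σ ^ 2 := hhc
        nlinarith [h1, h2]
  -- pathwise representation of the iterates
  have hYpath : ∀ i, ∀ k, k ≤ K → ∀ ω,
      y i k ω - xprev ω = -(ηl • ∑ j ∈ Finset.range k, gtil i j ω) := by
    intro i k
    induction k with
    | zero => intro _ ω; simp [hy0 i ω]
    | succ n ihn =>
      intro hk ω
      have hnK : n < K := lt_of_lt_of_le (Nat.lt_succ_self n) hk
      have h1 := hupd i n ω hnK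
      rw [Finset.sum_range_succ, h1]
      have h2 := ihn (le_of_lt hnK) ω
      have h3 : y i n ω - ηl • gtil i n ω - xprev ω
          = (y i n ω - xprev ω) - ηl • gtil i n ω := by abel
      rw [h3, h2, smul_add]
      abel
  have hYsq : ∀ i, ∀ k, k ≤ K → ∀ ω,
      ‖y i k ω - xprev ω‖ ^ 2 ≤ ηl ^ 2 * k * ∑ j ∈ Finset.range k, ‖gtil i j ω‖ ^ 2 := by
    intro i k hk ω
    have h0 := norm_sum_range_sq_le k (fun j => gtil i j ω)
    have h1 : ‖y i k ω - xprev ω‖ ^ 2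
        = ηl ^ 2 * ‖∑ j ∈ Finset.range k, gtil i j ω‖ ^ 2 := by
      rw [hYpath i k hk ω, norm_neg, norm_smul, Real.norm_eq_abs, mul_pow, sq_abs]
    rw [h1]
    calc ηl ^ 2 * ‖∑ j ∈ Finset.range k, gtil i j ω‖ ^ 2
        ≤ ηl ^ 2 * ((k:ℝ) * ∑ j ∈ Finset.range k, ‖gtil i j ω‖ ^ 2) :=
          mul_le_mul_of_nonneg_left h0 (sq_nonneg ηl)
      _ = ηl ^ 2 * k * ∑ j ∈ Finset.range k, ‖gtil i j ω‖ ^ 2 := by ring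
  -- conditional Cauchy–Schwarz bound
  have hYce : ∀ i, ∀ k, k ≤ K →
      μ[(fun ω' => ‖y i k ω' - xprev ω'‖ ^ 2)|ℱ0] ≤ᵐ[μ]
        fun ω => ηl ^ 2 * k * ∑ j ∈ Finset.range k,
          (μ[(fun ω' => ‖gtil i j ω'‖ ^ 2)|ℱ0]) ω := by
    intro i k hk
    have hRint : Integrable
        ((ηl ^ 2 * k : ℝ) • ∑ j ∈ Finset.range k, fun ω => ‖gtil i j ω‖ ^ 2) μ :=
      (integrable_finset_sum' _ fun j _ => hgtilSq i j).smul _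
    have hle : (fun ω' => ‖y i k ω' - xprev ω'‖ ^ 2) ≤ᵐ[μ]
        ((ηl ^ 2 * k : ℝ) • ∑ j ∈ Finset.range k, fun ω => ‖gtil i j ω‖ ^ 2) := by
      refine Filter.Eventually.of_forall fun ω => ?_
      have := hYsq i k hk ω
      simp only [Pi.smul_apply, Finset.sum_apply, smul_eq_mul]
      linarith
    have hmono := condExp_mono (μ := μ) (m := ℱ0) (hySq i k) hRint hle
    have hsm := condExp_smul (μ := μ) (m := ℱ0) (ηl ^ 2 * k : ℝ)
      (∑ j ∈ Finset.range k, fun ω => ‖gtil i j ω‖ ^ 2)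
    have hsum := condExp_finsetSum (μ := μ) (m := ℱ0)
      (s := Finset.range k) (f := fun j => fun ω => ‖gtil i j ω‖ ^ 2)
      (fun j _ => hgtilSq i j)
    filter_upwards [hmono, hsm, hsum] with ω h1 h2 h3
    calc (μ[(fun ω' => ‖y i k ω' - xprev ω'‖ ^ 2)|ℱ0]) ω
        ≤ (μ[(ηl ^ 2 * k : ℝ) • ∑ j ∈ Finset.range k, fun ω => ‖gtil i j ω‖ ^ 2|ℱ0]) ω := h1
      _ = (ηl ^ 2 * k : ℝ) * ((μ[∑ j ∈ Finset.range k, fun ω => ‖gtil i j ω‖ ^ 2|ℱ0]) ω) := by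
          rw [h2]; simp [smul_eq_mul]
      _ = ηl ^ 2 * k * ∑ j ∈ Finset.range k,
            (μ[(fun ω' => ‖gtil i j ω'‖ ^ 2)|ℱ0]) ω := by
          rw [h3]; simp [Finset.sum_apply]
  -- gather all a.e. statements
  have hAE1 : ∀ᵐ ω ∂μ, ∀ (i : Fin N) (k : ℕ),
      (μ[(fun ω' => ‖gtil i k ω'‖ ^ 2)|ℱ0]) ω
        ≤ 5 * σq ^ 2 + 5 * σ ^ 2
          + 5 * β ^ 2 * ((μ[(fun ω' => ‖y i k ω' - xprev ω'‖ ^ 2)|ℱ0]) ω)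
          + 5 * ‖gradient (f i) (xprev ω)‖ ^ 2 + 5 * Uq ^ 2 :=
    ae_all_iff.mpr fun i => ae_all_iff.mpr fun k => hcomb i k
  have hAE2 : ∀ᵐ ω ∂μ, ∀ (i : Fin N) (k : ℕ), k ≤ K →
      (μ[(fun ω' => ‖y i k ω' - xprev ω'‖ ^ 2)|ℱ0]) ω
        ≤ ηl ^ 2 * k * ∑ j ∈ Finset.range k,
            (μ[(fun ω' => ‖gtil i j ω'‖ ^ 2)|ℱ0]) ω := by
    rw [ae_all_iff]
    intro i
    rw [ae_all_iff]
    intro k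
    by_cases hk : k ≤ K
    · filter_upwards [hYce i k hk] with ω h _
      exact h
    · exact Filter.Eventually.of_forall fun ω h => absurd h hk
  filter_upwards [hAE1, hAE2] with ω H1 H2
  -- pointwise real computation at a fixed ω
  have hNR : (0:ℝ) < N := by exact_mod_cast hN
  have hKR : (0:ℝ) < K := by exact_mod_cast hK
  set Mv : ℝ := B ^ 2 * ‖gradient (globalObj f) (xprev ω)‖ ^ 2
      + G ^ 2 + Uq ^ 2 + σ ^ 2 + σq ^ 2 with hMvdef
  have hMv0 : 0 ≤ Mv := by rw [hMvdef]; positivity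
  have hηβK : ηl * β * (K:ℝ) ≤ 1 / 4 := by
    have hden : (0:ℝ) < (1 + B ^ 2) * β * K * ηg := by positivity
    have h1 : ηl * ((1 + B ^ 2) * β * (K:ℝ) * ηg) ≤ 1/2 := by
      have := (le_div_iff₀ hden).mp hstep
      linarith
    have hB2 : (2:ℝ) ≤ (1 + B ^ 2) * ηg := by nlinarith
    have h2 : (ηl * β * (K:ℝ)) * 2 ≤ (ηl * β * (K:ℝ)) * ((1 + B ^ 2) * ηg) :=
      mul_le_mul_of_nonneg_left hB2 (by positivity)
    have h3 : (ηl * β * (K:ℝ)) * ((1 + B ^ 2) * ηg)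
        = ηl * ((1 + B ^ 2) * β * (K:ℝ) * ηg) := by ring
    linarith
  -- recursion hypotheses
  have hSbound : ∀ k, k ≤ K →
      (1/(N:ℝ)) * ∑ i, (μ[(fun ω' => ‖y i k ω' - xprev ω'‖ ^ 2)|ℱ0]) ω
        ≤ ηl ^ 2 * k * ∑ j ∈ Finset.range k,
            ((1/(N:ℝ)) * ∑ i, (μ[(fun ω' => ‖gtil i j ω'‖ ^ 2)|ℱ0]) ω) := by
    intro k hk
    have h1 : ∑ i, (μ[(fun ω' => ‖y i k ω' - xprev ω'‖ ^ 2)|ℱ0]) ω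
        ≤ ∑ i : Fin N, (ηl ^ 2 * k * ∑ j ∈ Finset.range k,
            (μ[(fun ω' => ‖gtil i j ω'‖ ^ 2)|ℱ0]) ω) :=
      Finset.sum_le_sum fun i _ => H2 i k hk
    have h2 := mul_le_mul_of_nonneg_left h1 (by positivity : (0:ℝ) ≤ 1/(N:ℝ))
    refine h2.trans_eq ?_
    have e1 : ∑ i : Fin N, (ηl ^ 2 * k * ∑ j ∈ Finset.range k,
          (μ[(fun ω' => ‖gtil i j ω'‖ ^ 2)|ℱ0]) ω)
        = ηl ^ 2 * k * ∑ j ∈ Finset.range k, ∑ i : Fin N,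
            (μ[(fun ω' => ‖gtil i j ω'‖ ^ 2)|ℱ0]) ω := by
      rw [← Finset.mul_sum, Finset.sum_comm]
    have e2 : ∑ j ∈ Finset.range k, ((1/(N:ℝ)) * ∑ i : Fin N,
          (μ[(fun ω' => ‖gtil i j ω'‖ ^ 2)|ℱ0]) ω)
        = (1/(N:ℝ)) * ∑ j ∈ Finset.range k, ∑ i : Fin N,
            (μ[(fun ω' => ‖gtil i j ω'‖ ^ 2)|ℱ0]) ω := by
      rw [← Finset.mul_sum]
    rw [e1, e2]
    ring
  have hTbound : ∀ k, k < K →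
      (1/(N:ℝ)) * ∑ i, (μ[(fun ω' => ‖gtil i k ω'‖ ^ 2)|ℱ0]) ω
        ≤ 5 * Mv + 5 * β ^ 2 *
            ((1/(N:ℝ)) * ∑ i, (μ[(fun ω' => ‖y i k ω' - xprev ω'‖ ^ 2)|ℱ0]) ω) := by
    intro k _
    have h1 : ∑ i, (μ[(fun ω' => ‖gtil i k ω'‖ ^ 2)|ℱ0]) ω
        ≤ ∑ i : Fin N, (5 * σq ^ 2 + 5 * σ ^ 2
            + 5 * β ^ 2 * ((μ[(fun ω' => ‖y i k ω' - xprev ω'‖ ^ 2)|ℱ0]) ω)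
            + 5 * ‖gradient (f i) (xprev ω)‖ ^ 2 + 5 * Uq ^ 2) :=
      Finset.sum_le_sum fun i _ => H1 i k
    have e1 : ∑ i : Fin N, (5 * σq ^ 2 + 5 * σ ^ 2
          + 5 * β ^ 2 * ((μ[(fun ω' => ‖y i k ω' - xprev ω'‖ ^ 2)|ℱ0]) ω)
          + 5 * ‖gradient (f i) (xprev ω)‖ ^ 2 + 5 * Uq ^ 2)
        = (N:ℝ) * (5 * σq ^ 2) + (N:ℝ) * (5 * σ ^ 2)
          + 5 * β ^ 2 * (∑ i : Fin N, (μ[(fun ω' => ‖y i k ω' - xprev ω'‖ ^ 2)|ℱ0]) ω)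
          + 5 * (∑ i : Fin N, ‖gradient (f i) (xprev ω)‖ ^ 2)
          + (N:ℝ) * (5 * Uq ^ 2) := by
      rw [Finset.sum_add_distrib, Finset.sum_add_distrib, Finset.sum_add_distrib,
        Finset.sum_add_distrib, Finset.sum_const, Finset.sum_const, Finset.sum_const,
        Finset.card_univ, Fintype.card_fin, ← Finset.mul_sum, ← Finset.mul_sum,
        nsmul_eq_mul, nsmul_eq_mul, nsmul_eq_mul]
    have h2 := hdiss (xprev ω)
    have hNne : (N:ℝ) ≠ 0 := ne_of_gt hNR
    have h3 := mul_le_mul_of_nonneg_left (h1.trans_eq e1) (by positivity : (0:ℝ) ≤ 1/(N:ℝ))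
    have e3 : (1/(N:ℝ)) * ((N:ℝ) * (5 * σq ^ 2) + (N:ℝ) * (5 * σ ^ 2)
          + 5 * β ^ 2 * (∑ i : Fin N, (μ[(fun ω' => ‖y i k ω' - xprev ω'‖ ^ 2)|ℱ0]) ω)
          + 5 * (∑ i : Fin N, ‖gradient (f i) (xprev ω)‖ ^ 2)
          + (N:ℝ) * (5 * Uq ^ 2))
        = 5 * σq ^ 2 + 5 * σ ^ 2
          + 5 * β ^ 2 * ((1/(N:ℝ)) * ∑ i : Fin N,
              (μ[(fun ω' => ‖y i k ω' - xprev ω'‖ ^ 2)|ℱ0]) ω)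
          + 5 * ((1/(N:ℝ)) * ∑ i : Fin N, ‖gradient (f i) (xprev ω)‖ ^ 2)
          + 5 * Uq ^ 2 := by
      field_simp
    rw [e3] at h3
    have h4 : 5 * ((1/(N:ℝ)) * ∑ i : Fin N, ‖gradient (f i) (xprev ω)‖ ^ 2)
        ≤ 5 * (G ^ 2 + B ^ 2 * ‖gradient (globalObj f) (xprev ω)‖ ^ 2) := by
      linarith
    rw [hMvdef]
    linarith
  have hrec := drift_recursion K
    (fun k => (1/(N:ℝ)) * ∑ i, (μ[(fun ω' => ‖y i k ω' - xprev ω'‖ ^ 2)|ℱ0]) ω)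
    (fun k => (1/(N:ℝ)) * ∑ i, (μ[(fun ω' => ‖gtil i k ω'‖ ^ 2)|ℱ0]) ω)
    Mv ηl β hMv0 hηl.le hβ.le hηβK hSbound hTbound
  have hsk : ∀ k ∈ Finset.range K,
      (1/(N:ℝ)) * ∑ i, (μ[(fun ω' => ‖y i k ω' - xprev ω'‖ ^ 2)|ℱ0]) ω
        ≤ 10 * ηl ^ 2 * (K:ℝ) ^ 2 * Mv := by
    intro k hkmem
    have hk' : k ≤ K := (Finset.mem_range.mp hkmem).le
    have h1 := hrec k hk'
    have hk2 : ((k:ℕ):ℝ) ^ 2 ≤ ((K:ℕ):ℝ) ^ 2 := by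
      have hkk : (k:ℝ) ≤ (K:ℝ) := Nat.cast_le.mpr hk'
      have : (0:ℝ) ≤ (k:ℝ) := Nat.cast_nonneg k
      nlinarith
    have h2 : 10 * ηl ^ 2 * ((k:ℕ):ℝ) ^ 2 * Mv ≤ 10 * ηl ^ 2 * ((K:ℕ):ℝ) ^ 2 * Mv := by
      have h0 : (0:ℝ) ≤ 10 * ηl ^ 2 * Mv := by positivity
      nlinarith
    exact le_trans h1 h2
  have hfinal : ∑ k ∈ Finset.range K,
      ((1/(N:ℝ)) * ∑ i, (μ[(fun ω' => ‖y i k ω' - xprev ω'‖ ^ 2)|ℱ0]) ω)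
        ≤ (K:ℝ) * (10 * ηl ^ 2 * (K:ℝ) ^ 2 * Mv) := by
    calc ∑ k ∈ Finset.range K,
        ((1/(N:ℝ)) * ∑ i, (μ[(fun ω' => ‖y i k ω' - xprev ω'‖ ^ 2)|ℱ0]) ω)
        ≤ ∑ _k ∈ Finset.range K, (10 * ηl ^ 2 * (K:ℝ) ^ 2 * Mv) := Finset.sum_le_sum hsk
      _ = (K:ℝ) * (10 * ηl ^ 2 * (K:ℝ) ^ 2 * Mv) := by
          rw [Finset.sum_const, Finset.card_range, nsmul_eq_mul]
  have egoal : (1/((K:ℝ) * N)) * ∑ i, ∑ k ∈ Finset.range K,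
        (μ[(fun ω' => ‖y i k ω' - xprev ω'‖ ^ 2)|ℱ0]) ω
      = (1/(K:ℝ)) * ∑ k ∈ Finset.range K,
          ((1/(N:ℝ)) * ∑ i, (μ[(fun ω' => ‖y i k ω' - xprev ω'‖ ^ 2)|ℱ0]) ω) := by
    rw [Finset.sum_comm]
    rw [← Finset.mul_sum]
    ring
  rw [egoal]
  calc (1/(K:ℝ)) * ∑ k ∈ Finset.range K,
        ((1/(N:ℝ)) * ∑ i, (μ[(fun ω' => ‖y i k ω' - xprev ω'‖ ^ 2)|ℱ0]) ω)
      ≤ (1/(K:ℝ)) * ((K:ℝ) * (10 * ηl ^ 2 * (K:ℝ) ^ 2 * Mv)) :=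
        mul_le_mul_of_nonneg_left hfinal (by positivity)
    _ = 10 * ηl ^ 2 * (K:ℝ) ^ 2 * Mv := by
        field_simp
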